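/- Let N ≥ 2 workers run GADMM with penalty ρ > 0, generating primal iterates θ_n^k and dual iterates λ_n^k, and suppose the unaugmented Lagrangian L_0({θ_n},{λ_n}) = Σ_{n=1}^N f_n(θ_n) + Σ_{n=1}^{N−1} ⟨λ_n, θ_n − θ_{n+1}⟩ has a saddle point ((θ*,…,θ*), (λ_1*,…,λ_{N−1}*)). Then for every n ∈ {1,…,N−1} the primal residual converges to zero: lim_{k→∞} r_{n,n+1}^k = lim_{k→∞} (θ_n^k − θ_{n+1}^k) = 0. -/

import Mathlib

open Finset Filter
open scoped RealInnerProductSpace Topology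

section Helpers
variable {E : Type*} [NormedAddCommGroup E] [InnerProductSpace ℝ E]

private lemma min_to_subgrad (f : E → ℝ) (hf : ConvexOn ℝ Set.univ f) (ρ : ℝ) (hρ : 0 < ρ)
    (a c d p q : E)
    (H : ∀ x, f a + ⟪p, c - a⟫ + ⟪q, a - d⟫ + ρ/2*‖c - a‖^2 + ρ/2*‖a - d‖^2
        ≤ f x + ⟪p, c - x⟫ + ⟪q, x - d⟫ + ρ/2*‖c - x‖^2 + ρ/2*‖x - d‖^2) :
    ∀ x, f a - f x ≤ ⟪p - q + ρ•(c - a) + ρ•(d - a), a - x⟫ := by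
  intro x
  set S := ‖x - a‖^2 with hS
  have hSnn : 0 ≤ S := by positivity
  have goalK : ⟪p - q + ρ•(c - a) + ρ•(d - a), a - x⟫
      = -⟪p, x - a⟫ + ⟪q, x - a⟫ - ρ*⟪c - a, x - a⟫ + ρ*⟪a - d, x - a⟫ := by
    simp only [inner_sub_left, inner_sub_right, inner_add_left, inner_add_right,
      real_inner_smul_left]
    ring
  rw [goalK]
  have key : ∀ t : ℝ, 0 < t → t ≤ 1 →
      f a - f x ≤ (-⟪p, x - a⟫ + ⟪q, x - a⟫ - ρ*⟪c - a, x - a⟫ + ρ*⟪a - d, x - a⟫)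
        + t * (ρ * S) := by
    intro t ht ht1
    have hy := H (a + t • (x - a))
    have hcvx := hf.2 (Set.mem_univ a) (Set.mem_univ x)
      (by linarith : (0:ℝ) ≤ 1 - t) (le_of_lt ht) (by ring)
    have hyx : (1-t) • a + t • x = a + t • (x - a) := by module
    rw [hyx] at hcvx
    simp only [smul_eq_mul] at hcvx
    have e1 : c - (a + t • (x - a)) = c - a - t • (x - a) := by module
    have e2 : (a + t • (x - a)) - d = (a - d) + t • (x - a) := by module
    have I1 : ⟪p, c - (a + t • (x - a))⟫ = ⟪p, c - a⟫ - t * ⟪p, x - a⟫ := by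
      rw [e1, inner_sub_right, real_inner_smul_right]
    have I2 : ⟪q, (a + t • (x - a)) - d⟫ = ⟪q, a - d⟫ + t * ⟪q, x - a⟫ := by
      rw [e2, inner_add_right, real_inner_smul_right]
    have I3 : ‖c - (a + t • (x - a))‖^2
        = ‖c - a‖^2 - 2*(t*⟪c - a, x - a⟫) + t^2 * S := by
      rw [e1, norm_sub_sq_real, real_inner_smul_right, norm_smul, hS, mul_pow]
      simp [sq_abs]
      try ring
    have I4 : ‖(a + t • (x - a)) - d‖^2
        = ‖a - d‖^2 + 2*(t*⟪a - d, x - a⟫) + t^2 * S := by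
      rw [e2, norm_add_sq_real, real_inner_smul_right, norm_smul, hS, mul_pow]
      simp [sq_abs]
      try ring
    rw [I1, I2, I3, I4] at hy
    have h7 : t * (f a - f x) ≤ t * ((-⟪p, x - a⟫ + ⟪q, x - a⟫ - ρ*⟪c - a, x - a⟫
        + ρ*⟪a - d, x - a⟫) + t * (ρ * S)) := by nlinarith [hy, hcvx]
    exact (mul_le_mul_iff_right₀ ht).mp h7
  refine le_of_forall_pos_le_add ?_
  intro ε hε
  have hD : 0 < ρ * S + 1 := by positivity
  set t := min 1 (ε / (ρ * S + 1)) with htdef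
  have ht0 : 0 < t := lt_min one_pos (by positivity)
  have ht1 : t ≤ 1 := min_le_left _ _
  have hk := key t ht0 ht1
  have hts : t * (ρ * S) ≤ ε := by
    have h1 : t ≤ ε / (ρ * S + 1) := min_le_right _ _
    have h2 : t * (ρ * S) ≤ (ε / (ρ * S + 1)) * (ρ * S) :=
      mul_le_mul_of_nonneg_right h1 (by positivity)
    have h3 : (ε / (ρ * S + 1)) * (ρ * S) ≤ ε := by
      rw [div_mul_eq_mul_div, div_le_iff₀ hD]
      nlinarith [hε.le, mul_nonneg hρ.le hSnn]
    linarith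
  linarith

private lemma edge_left (ρ : ℝ) (hρ : 0 < ρ) (l ls s ae am bm : E) :
    ⟪ls - l, ae - am⟫ + ρ*⟪ae - am, am - s⟫ + ρ*⟪bm - ae, ae - s⟫
    ≤ (‖l - ls‖^2 - ‖l + ρ•(ae - am) - ls‖^2)/(2*ρ) - ρ/2*‖ae - am‖^2
      + ρ/2*(‖bm - s‖^2 - ‖am - s‖^2) - ρ*⟪am - bm, ae - am⟫ := by
  have key : ((‖l - ls‖^2 - ‖l + ρ•(ae - am) - ls‖^2)/(2*ρ) - ρ/2*‖ae - am‖^2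
      + ρ/2*(‖bm - s‖^2 - ‖am - s‖^2) - ρ*⟪am - bm, ae - am⟫)
      - (⟪ls - l, ae - am⟫ + ρ*⟪ae - am, am - s⟫ + ρ*⟪bm - ae, ae - s⟫)
      = ρ/2 * ‖am - bm‖^2 := by
    simp only [← real_inner_self_eq_norm_sq, inner_sub_left, inner_sub_right,
      inner_add_left, inner_add_right, real_inner_smul_left, real_inner_smul_right,
      real_inner_comm]
    field_simp
    ring
  nlinarith [key, sq_nonneg ‖am - bm‖, hρ.le]

private lemma edge_right (ρ : ℝ) (hρ : 0 < ρ) (l ls s ah am bm : E) :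
    ⟪ls - l, am - ah⟫ + ρ*⟪bm - ah, ah - s⟫ + ρ*⟪ah - am, am - s⟫
    ≤ (‖l - ls‖^2 - ‖l + ρ•(am - ah) - ls‖^2)/(2*ρ) - ρ/2*‖am - ah‖^2
      + ρ/2*(‖bm - s‖^2 - ‖am - s‖^2) + ρ*⟪am - bm, am - ah⟫ := by
  have key : ((‖l - ls‖^2 - ‖l + ρ•(am - ah) - ls‖^2)/(2*ρ) - ρ/2*‖am - ah‖^2
      + ρ/2*(‖bm - s‖^2 - ‖am - s‖^2) + ρ*⟪am - bm, am - ah⟫)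
      - (⟪ls - l, am - ah⟫ + ρ*⟪bm - ah, ah - s⟫ + ρ*⟪ah - am, am - s⟫)
      = ρ/2 * ‖am - bm‖^2 := by
    simp only [← real_inner_self_eq_norm_sq, inner_sub_left, inner_sub_right,
      inner_add_left, inner_add_right, real_inner_smul_left, real_inner_smul_right,
      real_inner_comm]
    field_simp
    ring
  nlinarith [key, sq_nonneg ‖am - bm‖, hρ.le]

private lemma pair_sum (M : ℕ → ℝ) : ∀ p : ℕ, 1 ≤ p →
    ∑ e ∈ Icc 1 (2*p - 1), M e
      = M (2*p - 1) + ∑ j ∈ Icc 1 (p - 1), (M (2*j - 1) + M (2*j)) := by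
  intro p hp
  induction p with
  | zero => omega
  | succ p ih =>
    rcases Nat.eq_or_lt_of_le hp with h1 | h1
    · simp [← h1]
    · have hp1 : 1 ≤ p := by omega
      have e1 : 2*(p+1) - 1 = (2*p - 1) + 1 + 1 := by omega
      have e2 : (p+1) - 1 = (p - 1) + 1 := by omega
      have e3 : 2*p - 1 + 1 = 2*p := by omega
      have e5 : 2*((p-1)+1) - 1 = 2*p - 1 := by omega
      have e6 : 2*((p-1)+1) = 2*p := by omega
      rw [e1, e2, Finset.sum_Icc_succ_top (by omega), Finset.sum_Icc_succ_top (by omega),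
        Finset.sum_Icc_succ_top (by omega), ih hp1]
      rw [e5, e6, e3]
      ring

end Helpers
/-- The unaugmented Lagrangian `L_0({θ_n}, {λ_n})`. -/
noncomputable def L0 {E : Type*} [NormedAddCommGroup E] [InnerProductSpace ℝ E]
    (N : ℕ) (f : ℕ → E → ℝ) (th la : ℕ → E) : ℝ :=
  ∑ n ∈ Finset.Icc 1 N, f n (th n)
    + ∑ n ∈ Finset.Icc 1 (N-1), ⟪la n, th n - th (n+1)⟫

theorem gadmm_primal_residual_tendsto_zero
    {E : Type*} [NormedAddCommGroup E] [InnerProductSpace ℝ E] [FiniteDimensional ℝ E]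
    (N : ℕ) (hN : 2 ≤ N) (hNeven : Even N)
    (f : ℕ → E → ℝ) (hconv : ∀ n, ConvexOn ℝ Set.univ (f n))
    (ρ : ℝ) (hρ : 0 < ρ)
    (θ lam : ℕ → ℕ → E)
    -- (a) head updates: interior odd workers 1 < n ≤ N
    (hHead : ∀ k n, Odd n → 1 < n → n ≤ N → ∀ x : E,
      f n (θ (k+1) n) + ⟪lam k (n-1), θ k (n-1) - θ (k+1) n⟫
        + ⟪lam k n, θ (k+1) n - θ k (n+1)⟫
        + ρ/2 * ‖θ k (n-1) - θ (k+1) n‖^2 + ρ/2 * ‖θ (k+1) n - θ k (n+1)‖^2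
      ≤ f n x + ⟪lam k (n-1), θ k (n-1) - x⟫ + ⟪lam k n, x - θ k (n+1)⟫
        + ρ/2 * ‖θ k (n-1) - x‖^2 + ρ/2 * ‖x - θ k (n+1)‖^2)
    -- (a) head update for the first worker n = 1
    (hHead1 : ∀ k, ∀ x : E,
      f 1 (θ (k+1) 1) + ⟪lam k 1, θ (k+1) 1 - θ k 2⟫ + ρ/2 * ‖θ (k+1) 1 - θ k 2‖^2
      ≤ f 1 x + ⟪lam k 1, x - θ k 2⟫ + ρ/2 * ‖x - θ k 2‖^2)
    -- (b) tail updates: even workers 0 < n < N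
    (hTail : ∀ k n, Even n → 0 < n → n < N → ∀ x : E,
      f n (θ (k+1) n) + ⟪lam k (n-1), θ (k+1) (n-1) - θ (k+1) n⟫
        + ⟪lam k n, θ (k+1) n - θ (k+1) (n+1)⟫
        + ρ/2 * ‖θ (k+1) (n-1) - θ (k+1) n‖^2 + ρ/2 * ‖θ (k+1) n - θ (k+1) (n+1)‖^2
      ≤ f n x + ⟪lam k (n-1), θ (k+1) (n-1) - x⟫ + ⟪lam k n, x - θ (k+1) (n+1)⟫
        + ρ/2 * ‖θ (k+1) (n-1) - x‖^2 + ρ/2 * ‖x - θ (k+1) (n+1)‖^2)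
    -- (b) tail update for the last worker n = N
    (hTailN : ∀ k, ∀ x : E,
      f N (θ (k+1) N) + ⟪lam k (N-1), θ (k+1) (N-1) - θ (k+1) N⟫
        + ρ/2 * ‖θ (k+1) (N-1) - θ (k+1) N‖^2
      ≤ f N x + ⟪lam k (N-1), θ (k+1) (N-1) - x⟫ + ρ/2 * ‖θ (k+1) (N-1) - x‖^2)
    -- (c) dual updates
    (hDual : ∀ k n, 1 ≤ n → n ≤ N - 1 →
      lam (k+1) n = lam k n + ρ • (θ (k+1) n - θ (k+1) (n+1)))
    (θstar : E) (lamstar : ℕ → E)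
    (hsaddle : ∀ (th la : ℕ → E),
      L0 N f (fun _ => θstar) la ≤ L0 N f (fun _ => θstar) lamstar ∧
      L0 N f (fun _ => θstar) lamstar ≤ L0 N f th lamstar) :
    ∀ n, 1 ≤ n → n ≤ N - 1 →
      Tendsto (fun k => θ k n - θ k (n+1)) atTop (𝓝 (0 : E)) := by
  obtain ⟨p, hp2⟩ := hNeven
  have hpN : N = 2 * p := by omega
  have hp1 : 1 ≤ p := by omega
  -- local functions
  set A : ℕ → ℕ → E := fun k e =>
    lam k e + ρ • ((if Even e then θ k e else θ (k+1) e) - θ (k+1) (e+1)) with hA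
  set B : ℕ → ℕ → E := fun k e =>
    -lam k e + ρ • ((if Even e then θ (k+1) (e+1) else θ k (e+1)) - θ (k+1) e) with hB
  set G : ℕ → ℕ → E := fun k n =>
    (if 2 ≤ n then A k (n-1) else 0) + (if n ≤ N-1 then B k n else 0) with hG
  -- Step 1: subgradient-type inequalities for every worker
  have SG : ∀ k, ∀ n, 1 ≤ n → n ≤ N → ∀ x : E,
      f n (θ (k+1) n) - f n x ≤ ⟪G k n, θ (k+1) n - x⟫ := by
    intro k n hn1 hnN x
    rcases Nat.even_or_odd n with heven | hodd
    · -- tails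
      have hn2 : 2 ≤ n := by
        rcases heven with ⟨j, hj⟩; omega
      have hnodd : ¬ Even (n-1) := by
        rw [Nat.even_iff] at heven ⊢; omega
      rcases Nat.eq_or_lt_of_le hnN with hND | hlt
      · -- n = N
        subst hND
        have hGv : G k n = lam k (n-1) + ρ • (θ (k+1) (n-1) - θ (k+1) n)
            + (0 - 0 + ρ • (θ (k+1) n - θ (k+1) n)) := by
          rw [hG]
          simp only [if_pos hn2, if_neg (by omega : ¬ n ≤ n - 1)]
          rw [hA]
          simp only [if_neg hnodd, Nat.sub_add_cancel (by omega : 1 ≤ n)]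
          simp
        have := min_to_subgrad (f n) (hconv n) ρ hρ (θ (k+1) n) (θ (k+1) (n-1))
          (θ (k+1) n) (lam k (n-1)) 0 ?_ x
        · calc f n (θ (k+1) n) - f n x ≤ _ := this
            _ = ⟪G k n, θ (k+1) n - x⟫ := by
              rw [hGv]; congr 1; module
        · intro y
          have h0 := hTailN k y
          simp only [inner_zero_left, sub_self, norm_zero]
          have hnn : (0:ℝ) ≤ ρ/2 * ‖y - θ (k+1) n‖^2 := by positivity
          calc f n (θ (k+1) n) + ⟪lam k (n-1), θ (k+1) (n-1) - θ (k+1) n⟫ + 0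
                + ρ/2*‖θ (k+1) (n-1) - θ (k+1) n‖^2 + ρ/2*0^2
              = f n (θ (k+1) n) + ⟪lam k (n-1), θ (k+1) (n-1) - θ (k+1) n⟫
                + ρ/2 * ‖θ (k+1) (n-1) - θ (k+1) n‖^2 := by ring
            _ ≤ f n y + ⟪lam k (n-1), θ (k+1) (n-1) - y⟫
                + ρ/2 * ‖θ (k+1) (n-1) - y‖^2 := h0
            _ ≤ f n y + ⟪lam k (n-1), θ (k+1) (n-1) - y⟫ + 0
                + ρ/2*‖θ (k+1) (n-1) - y‖^2 + ρ/2*‖y - θ (k+1) n‖^2 := by linarith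
      · -- n < N
        have hGv : G k n = lam k (n-1) + ρ • (θ (k+1) (n-1) - θ (k+1) n)
            + (-lam k n + ρ • (θ (k+1) (n+1) - θ (k+1) n)) := by
          rw [hG]
          simp only [if_pos hn2, if_pos (by omega : n ≤ N - 1)]
          rw [hA, hB]
          simp only [if_neg hnodd, if_pos heven, Nat.sub_add_cancel (by omega : 1 ≤ n)]
        have := min_to_subgrad (f n) (hconv n) ρ hρ (θ (k+1) n) (θ (k+1) (n-1))
          (θ (k+1) (n+1)) (lam k (n-1)) (lam k n) (hTail k n heven (by omega) hlt) x
        calc f n (θ (k+1) n) - f n x ≤ _ := this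
          _ = ⟪G k n, θ (k+1) n - x⟫ := by
            rw [hGv]; congr 1; module
    · -- heads
      have hnev : ¬ Even n := by rw [Nat.even_iff]; rw [Nat.odd_iff] at hodd; omega
      have hnN' : n ≤ N - 1 := by
        rw [Nat.odd_iff] at hodd; omega
      rcases Nat.eq_or_lt_of_le hn1 with h1 | h1
      · -- n = 1
        have hn1' : n = 1 := h1.symm
        subst hn1'
        have hGv : G k 1 = 0 - lam k 1 + ρ • (θ (k+1) 1 - θ (k+1) 1)
            + ρ • (θ k 2 - θ (k+1) 1) := by
          rw [hG]
          simp only [if_neg (by omega : ¬ 2 ≤ 1), if_pos (by omega : 1 ≤ N - 1)]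
          rw [hB]
          simp only [if_neg (by decide : ¬ Even 1)]
          simp
          all_goals module
        have := min_to_subgrad (f 1) (hconv 1) ρ hρ (θ (k+1) 1) (θ (k+1) 1)
          (θ k 2) 0 (lam k 1) ?_ x
        · calc f 1 (θ (k+1) 1) - f 1 x ≤ _ := this
            _ = ⟪G k 1, θ (k+1) 1 - x⟫ := by
              rw [hGv]
        · intro y
          have h0 := hHead1 k y
          simp only [inner_zero_left, sub_self, norm_zero]
          have hnn : (0:ℝ) ≤ ρ/2 * ‖θ (k+1) 1 - y‖^2 := by positivity
          calc f 1 (θ (k+1) 1) + 0 + ⟪lam k 1, θ (k+1) 1 - θ k 2⟫ + ρ/2*0^2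
                + ρ/2*‖θ (k+1) 1 - θ k 2‖^2
              = f 1 (θ (k+1) 1) + ⟪lam k 1, θ (k+1) 1 - θ k 2⟫
                + ρ/2*‖θ (k+1) 1 - θ k 2‖^2 := by ring
            _ ≤ f 1 y + ⟪lam k 1, y - θ k 2⟫ + ρ/2*‖y - θ k 2‖^2 := h0
            _ ≤ f 1 y + 0 + ⟪lam k 1, y - θ k 2⟫ + ρ/2*‖θ (k+1) 1 - y‖^2
                + ρ/2*‖y - θ k 2‖^2 := by linarith
      · -- 1 < n, odd head
        have hev1 : Even (n-1) := by
          rw [Nat.odd_iff] at hodd; rw [Nat.even_iff]; omega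
        have hGv : G k n = lam k (n-1) + ρ • (θ k (n-1) - θ (k+1) n)
            + (-lam k n + ρ • (θ k (n+1) - θ (k+1) n)) := by
          rw [hG]
          simp only [if_pos (by omega : 2 ≤ n), if_pos hnN']
          rw [hA, hB]
          simp only [if_pos hev1, if_neg hnev, Nat.sub_add_cancel (by omega : 1 ≤ n)]
        have := min_to_subgrad (f n) (hconv n) ρ hρ (θ (k+1) n) (θ k (n-1))
          (θ k (n+1)) (lam k (n-1)) (lam k n) (hHead k n hodd h1 hnN) x
        calc f n (θ (k+1) n) - f n x ≤ _ := this
          _ = ⟪G k n, θ (k+1) n - x⟫ := by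
            rw [hGv]; congr 1; module
  -- Step 2: sum over workers equals sum over edges
  have hsumG : ∀ k, ∑ n ∈ Icc 1 N, ⟪G k n, θ (k+1) n - θstar⟫
      = ∑ e ∈ Icc 1 (N-1),
        (⟪A k e, θ (k+1) (e+1) - θstar⟫ + ⟪B k e, θ (k+1) e - θstar⟫) := by
    intro k
    have hsplit : ∑ n ∈ Icc 1 N, ⟪G k n, θ (k+1) n - θstar⟫
        = (∑ n ∈ Icc 1 N, if 2 ≤ n then ⟪A k (n-1), θ (k+1) n - θstar⟫ else 0)
          + (∑ n ∈ Icc 1 N, if n ≤ N-1 then ⟪B k n, θ (k+1) n - θstar⟫ else 0) := by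
      rw [← Finset.sum_add_distrib]
      refine Finset.sum_congr rfl ?_
      intro n _
      rw [hG]
      simp only
      rw [inner_add_left]
      congr 1
      · split_ifs <;> simp
      · split_ifs <;> simp
    rw [hsplit]
    have hf1 : Finset.filter (fun n => 2 ≤ n) (Icc 1 N) = Icc 2 N := by
      ext m; simp only [Finset.mem_filter, Finset.mem_Icc]; omega
    have hf2 : Finset.filter (fun n => n ≤ N-1) (Icc 1 N) = Icc 1 (N-1) := by
      ext m; simp only [Finset.mem_filter, Finset.mem_Icc]; omega
    rw [← Finset.sum_filter, ← Finset.sum_filter, hf1, hf2, Finset.sum_add_distrib]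
    congr 1
    refine Finset.sum_nbij' (fun n => n - 1) (fun e => e + 1) ?_ ?_ ?_ ?_ ?_
    · intro a ha; simp only [Finset.mem_Icc] at *; omega
    · intro a ha; simp only [Finset.mem_Icc] at *; omega
    · intro a ha; simp only [Finset.mem_Icc] at ha; show a - 1 + 1 = a; omega
    · intro a ha; simp only [Finset.mem_Icc] at ha; show a + 1 - 1 = a; omega
    · intro a ha
      simp only [Finset.mem_Icc] at ha
      rw [Nat.sub_add_cancel (by omega : 1 ≤ a)]
  -- Step 3: saddle point inequality
  have hsad : ∀ k, (0:ℝ) ≤ ∑ n ∈ Icc 1 N, (f n (θ (k+1) n) - f n θstar)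
      + ∑ e ∈ Icc 1 (N-1), ⟪lamstar e, θ (k+1) e - θ (k+1) (e+1)⟫ := by
    intro k
    have h0 := (hsaddle (θ (k+1)) lamstar).2
    unfold L0 at h0
    simp only [sub_self, inner_zero_right, Finset.sum_const_zero, add_zero] at h0
    rw [Finset.sum_sub_distrib]
    linarith
  -- edge-indexed quantities
  set tl : ℕ → ℕ := fun e => if Even e then e else e+1 with htl
  set X : ℕ → ℕ → ℝ := fun k e => ⟪A k e, θ (k+1) (e+1) - θstar⟫
    + ⟪B k e, θ (k+1) e - θstar⟫
    + ⟪lamstar e, θ (k+1) e - θ (k+1) (e+1)⟫ with hX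
  set D : ℕ → ℕ → ℝ := fun k e =>
    (‖lam k e - lamstar e‖^2 - ‖lam (k+1) e - lamstar e‖^2)/(2*ρ)
    - ρ/2*‖θ (k+1) e - θ (k+1) (e+1)‖^2
    + ρ/2*(‖θ k (tl e) - θstar‖^2 - ‖θ (k+1) (tl e) - θstar‖^2) with hD
  set M : ℕ → ℕ → ℝ := fun k e =>
    if Even e then ρ*⟪θ (k+1) e - θ k e, θ (k+1) e - θ (k+1) (e+1)⟫
    else -(ρ*⟪θ (k+1) (e+1) - θ k (e+1), θ (k+1) e - θ (k+1) (e+1)⟫) with hM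
  set Φ : ℕ → ℝ := fun k => ∑ e ∈ Icc 1 (N-1),
    (‖lam k e - lamstar e‖^2/(2*ρ) + ρ/2*‖θ k (tl e) - θstar‖^2) with hΦ
  set R : ℕ → ℝ := fun k => ∑ e ∈ Icc 1 (N-1), ‖θ k e - θ k (e+1)‖^2 with hR
  -- Step 4: 0 ≤ ∑ X
  have hXpos : ∀ k, (0:ℝ) ≤ ∑ e ∈ Icc 1 (N-1), X k e := by
    intro k
    have h1 : ∑ n ∈ Icc 1 N, (f n (θ (k+1) n) - f n θstar)
        ≤ ∑ n ∈ Icc 1 N, ⟪G k n, θ (k+1) n - θstar⟫ := by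
      refine Finset.sum_le_sum ?_
      intro n hn
      have hn' := Finset.mem_Icc.mp hn
      exact SG k n hn'.1 hn'.2 θstar
    have h3 : ∑ e ∈ Icc 1 (N-1), X k e
        = ∑ e ∈ Icc 1 (N-1),
            (⟪A k e, θ (k+1) (e+1) - θstar⟫ + ⟪B k e, θ (k+1) e - θstar⟫)
          + ∑ e ∈ Icc 1 (N-1), ⟪lamstar e, θ (k+1) e - θ (k+1) (e+1)⟫ := by
      rw [← Finset.sum_add_distrib]
    have h2 := hsad k
    rw [h3, ← hsumG k]
    linarith
  -- Step 5: per-edge bound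
  have hXD : ∀ k, ∀ e, 1 ≤ e → e ≤ N-1 → X k e ≤ D k e + M k e := by
    intro k e he1 he2
    have hd := hDual k e he1 he2
    rcases Nat.even_or_odd e with heven | hodd
    · have hle := edge_right ρ hρ (lam k e) (lamstar e) θstar
        (θ (k+1) (e+1)) (θ (k+1) e) (θ k e)
      calc X k e = ⟪lamstar e - lam k e, θ (k+1) e - θ (k+1) (e+1)⟫
            + ρ*⟪θ k e - θ (k+1) (e+1), θ (k+1) (e+1) - θstar⟫
            + ρ*⟪θ (k+1) (e+1) - θ (k+1) e, θ (k+1) e - θstar⟫ := by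
              rw [hX, hA, hB]
              simp only [if_pos heven]
              simp only [inner_add_left, inner_sub_left, inner_sub_right, inner_neg_left,
                real_inner_smul_left, real_inner_smul_right, real_inner_comm]
              all_goals ring
        _ ≤ _ := hle
        _ = D k e + M k e := by
              rw [hD, hM, htl]
              simp only [if_pos heven]
              rw [hd]
              all_goals ring
    · have hodd' : ¬ Even e := by
        rw [Nat.even_iff]; rw [Nat.odd_iff] at hodd; omega
      have hle := edge_left ρ hρ (lam k e) (lamstar e) θstar
        (θ (k+1) e) (θ (k+1) (e+1)) (θ k (e+1))
      calc X k e = ⟪lamstar e - lam k e, θ (k+1) e - θ (k+1) (e+1)⟫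
            + ρ*⟪θ (k+1) e - θ (k+1) (e+1), θ (k+1) (e+1) - θstar⟫
            + ρ*⟪θ k (e+1) - θ (k+1) e, θ (k+1) e - θstar⟫ := by
              rw [hX, hA, hB]
              simp only [if_neg hodd']
              simp only [inner_add_left, inner_sub_left, inner_sub_right, inner_neg_left,
                real_inner_smul_left, real_inner_smul_right, real_inner_comm]
              all_goals ring
        _ ≤ _ := hle
        _ = D k e + M k e := by
              rw [hD, hM, htl]
              simp only [if_neg hodd']
              rw [hd]
              all_goals ring
  -- Step 6: sum of D telescopes
  have hDsum : ∀ k, ∑ e ∈ Icc 1 (N-1), D k e = Φ k - Φ (k+1) - ρ/2 * R (k+1) := by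
    intro k
    rw [hΦ, hR]
    simp only
    rw [← Finset.sum_sub_distrib, Finset.mul_sum, ← Finset.sum_sub_distrib]
    refine Finset.sum_congr rfl ?_
    intro e _
    rw [hD]
    simp only
    field_simp
    ring
  -- Step 7: sum of M is nonpositive (monotonicity of tail subgradients)
  have hMsum : ∀ k, ∑ e ∈ Icc 1 (N-1), M (k+1) e ≤ 0 := by
    intro k
    have hN1 : N - 1 = 2*p - 1 := by omega
    rw [hN1, pair_sum (M (k+1)) p hp1]
    have hmono : ∀ m, 2 ≤ m → m ≤ N →
        (0:ℝ) ≤ ⟪G (k+1) m - G k m, θ (k+1+1) m - θ (k+1) m⟫ := by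
      intro m hm2 hmN
      have h1 := SG (k+1) m (by omega) hmN (θ (k+1) m)
      have h2 := SG k m (by omega) hmN (θ (k+1+1) m)
      have h3 : ⟪G k m, θ (k+1) m - θ (k+1+1) m⟫
          = -⟪G k m, θ (k+1+1) m - θ (k+1) m⟫ := by
        rw [show θ (k+1) m - θ (k+1+1) m = -(θ (k+1+1) m - θ (k+1) m) by abel,
          inner_neg_right]
      rw [inner_sub_left]
      rw [h3] at h2
      linarith
    have hlast : M (k+1) (2*p-1) ≤ 0 := by
      have hoddp : ¬ Even (2*p-1) := by rw [Nat.even_iff]; omega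
      have hp11 : 2*p - 1 + 1 = N := by omega
      have hGdiff : G (k+1) N - G k N = ρ • (θ (k+1+1) (N-1) - θ (k+1+1) N) := by
        rw [hG, hA]
        simp only [if_pos (by omega : 2 ≤ N), if_neg (by omega : ¬ N ≤ N - 1),
          if_neg (by rw [Nat.even_iff]; omega : ¬ Even (N-1)),
          Nat.sub_add_cancel (by omega : 1 ≤ N)]
        rw [hDual k (N-1) (by omega) (by omega)]
        rw [show N - 1 + 1 = N by omega]
        module
      have hmN := hmono N hN le_rfl
      rw [hGdiff, real_inner_smul_left] at hmN
      rw [hM]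
      simp only [if_neg hoddp]
      rw [show 2*p - 1 = N - 1 by omega, show N - 1 + 1 = N by omega]
      have hc : ρ * ⟪θ (k+1+1) (N-1) - θ (k+1+1) N, θ (k+1+1) N - θ (k+1) N⟫
          = ρ * ⟪θ (k+1+1) N - θ (k+1) N, θ (k+1+1) (N-1) - θ (k+1+1) N⟫ := by
        rw [real_inner_comm]
      linarith [hmN, hc]
    have hpairs : ∑ j ∈ Icc 1 (p-1), (M (k+1) (2*j-1) + M (k+1) (2*j)) ≤ 0 := by
      refine Finset.sum_nonpos ?_
      intro j hj
      have hj' := Finset.mem_Icc.mp hj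
      set m := 2*j with hm
      have hm2 : 2 ≤ m := by omega
      have hmN : m ≤ N - 2 := by omega
      have hoddm : ¬ Even (m-1) := by rw [Nat.even_iff]; omega
      have hevm : Even m := ⟨j, by omega⟩
      have hGdiff : G (k+1) m - G k m
          = ρ • (θ (k+1+1) (m-1) - θ (k+1+1) m)
            - ρ • (θ (k+1+1) m - θ (k+1+1) (m+1)) := by
        rw [hG, hA, hB]
        simp only [if_pos hm2, if_pos (by omega : m ≤ N - 1), if_neg hoddm,
          if_pos hevm, Nat.sub_add_cancel (by omega : 1 ≤ m)]
        rw [hDual k (m-1) (by omega) (by omega), hDual k m (by omega) (by omega)]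
        rw [show m - 1 + 1 = m by omega]
        module
      have hmm := hmono m hm2 (by omega)
      rw [hGdiff] at hmm
      have hexp : ⟪ρ • (θ (k+1+1) (m-1) - θ (k+1+1) m)
            - ρ • (θ (k+1+1) m - θ (k+1+1) (m+1)), θ (k+1+1) m - θ (k+1) m⟫
          = ρ * ⟪θ (k+1+1) (m-1) - θ (k+1+1) m, θ (k+1+1) m - θ (k+1) m⟫
            - ρ * ⟪θ (k+1+1) m - θ (k+1+1) (m+1), θ (k+1+1) m - θ (k+1) m⟫ := by
        rw [inner_sub_left, real_inner_smul_left, real_inner_smul_left]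
      rw [hexp] at hmm
      have e1 : M (k+1) (m-1) = -(ρ*⟪θ (k+1+1) m - θ (k+1) m,
          θ (k+1+1) (m-1) - θ (k+1+1) m⟫) := by
        rw [hM]
        simp only [if_neg hoddm]
        rw [show m - 1 + 1 = m by omega]
      have e2 : M (k+1) m = ρ*⟪θ (k+1+1) m - θ (k+1) m,
          θ (k+1+1) m - θ (k+1+1) (m+1)⟫ := by
        rw [hM]
        simp only [if_pos hevm]
      rw [show 2*j - 1 = m - 1 from rfl, e1, e2]
      have hc1 : ρ * ⟪θ (k+1+1) (m-1) - θ (k+1+1) m, θ (k+1+1) m - θ (k+1) m⟫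
          = ρ * ⟪θ (k+1+1) m - θ (k+1) m, θ (k+1+1) (m-1) - θ (k+1+1) m⟫ := by
        rw [real_inner_comm]
      have hc2 : ρ * ⟪θ (k+1+1) m - θ (k+1+1) (m+1), θ (k+1+1) m - θ (k+1) m⟫
          = ρ * ⟪θ (k+1+1) m - θ (k+1) m, θ (k+1+1) m - θ (k+1+1) (m+1)⟫ := by
        rw [real_inner_comm]
      linarith [hmm, hc1, hc2]
    linarith
  -- Step 8: master descent inequality
  have hmaster : ∀ k, Φ (k+1+1) + ρ/2 * R (k+1+1) ≤ Φ (k+1) := by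
    intro k
    have h0 := hXpos (k+1)
    have h1 : ∑ e ∈ Icc 1 (N-1), X (k+1) e
        ≤ ∑ e ∈ Icc 1 (N-1), (D (k+1) e + M (k+1) e) := by
      refine Finset.sum_le_sum ?_
      intro e he
      have he' := Finset.mem_Icc.mp he
      exact hXD (k+1) e he'.1 he'.2
    have h4 : ∑ e ∈ Icc 1 (N-1), (D (k+1) e + M (k+1) e)
        = ∑ e ∈ Icc 1 (N-1), D (k+1) e + ∑ e ∈ Icc 1 (N-1), M (k+1) e :=
      Finset.sum_add_distrib
    have h2 := hMsum k
    have h3 := hDsum (k+1)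
    linarith
  -- Step 9: nonnegativity and summability
  have hΦnn : ∀ k, 0 ≤ Φ k := by
    intro k
    rw [hΦ]
    refine Finset.sum_nonneg ?_
    intro e _
    positivity
  have hRnn : ∀ k, 0 ≤ R k := by
    intro k
    rw [hR]
    refine Finset.sum_nonneg ?_
    intro e _
    positivity
  have hpartial : ∀ K : ℕ, ∑ i ∈ Finset.range K, (ρ/2 * R (i+1+1)) ≤ Φ 1 := by
    intro K
    have hh : ∑ i ∈ Finset.range K, (ρ/2 * R (i+1+1)) ≤ Φ 1 - Φ (K+1) := by
      induction K with
      | zero => simp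
      | succ K ih =>
        rw [Finset.sum_range_succ]
        have := hmaster K
        linarith
    linarith [hΦnn (K+1)]
  have hsummable : Summable (fun i => ρ/2 * R (i+1+1)) := by
    refine summable_of_sum_range_le ?_ hpartial
    intro i
    have := hRnn (i+1+1)
    positivity
  have htend0 : Tendsto (fun i => ρ/2 * R (i+1+1)) atTop (𝓝 0) :=
    hsummable.tendsto_atTop_zero
  have htendR : Tendsto (fun i => R (i+1+1)) atTop (𝓝 0) := by
    have h := htend0.const_mul (2/ρ)
    have heq : (fun i => (2/ρ) * (ρ/2 * R (i+1+1))) = fun i => R (i+1+1) := by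
      funext i
      field_simp
    rw [mul_zero] at h
    rwa [heq] at h
  -- Step 10: conclusion
  intro n hn1 hn2
  have hterm : Tendsto (fun i => ‖θ (i+1+1) n - θ (i+1+1) (n+1)‖^2) atTop (𝓝 0) := by
    refine squeeze_zero (fun i => by positivity) ?_ htendR
    intro i
    rw [hR]
    exact Finset.single_le_sum (f := fun e => ‖θ (i+1+1) e - θ (i+1+1) (e+1)‖^2)
      (fun e _ => by positivity) (Finset.mem_Icc.mpr ⟨hn1, hn2⟩)
  have hnorm : Tendsto (fun i => ‖θ (i+1+1) n - θ (i+1+1) (n+1)‖) atTop (𝓝 0) := by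
    have h := hterm.sqrt
    rw [Real.sqrt_zero] at h
    have heq : (fun i => Real.sqrt (‖θ (i+1+1) n - θ (i+1+1) (n+1)‖^2))
        = fun i => ‖θ (i+1+1) n - θ (i+1+1) (n+1)‖ := by
      funext i
      exact Real.sqrt_sq (norm_nonneg _)
    rwa [heq] at h
  have hvec : Tendsto (fun i => θ (i+1+1) n - θ (i+1+1) (n+1)) atTop (𝓝 (0:E)) :=
    tendsto_zero_iff_norm_tendsto_zero.mpr hnorm
  exact (tendsto_add_atTop_iff_nat 2).mp hvec
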